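/- arXiv:1204.3439 — 5 statements merged into one kernel-verified Lean document; each statement's English description precedes it below -/
import Mathlib

section
/- (Katznelson) For every lacunary strictly increasing sequence f : ℕ → ℕ, i.e. one for which there exists ε > 0 with f(n+1) ≥ (1+ε)·f(n) for all n, there exists a finite d and a two-sided sequence x : ℤ → Fin d with x_i ≠ x_{i+f(n)} for all i ∈ ℤ and n ∈ ℕ; that is, X_{(d,f)} ≠ ∅ for some finite d. -/
noncomputable def katzM (g : ℕ → ℕ) : ℕ → ℤ
  | 0 => 0
  | k+1 => ⌈(g (k+1) : ℝ) * (((katzM g k : ℝ) + 1/4) / (g k : ℝ)) - 1/4⌉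

lemma katz_exists_alpha (g : ℕ → ℕ) (hg1 : 1 ≤ g 0) (hg : ∀ k, 3 * g k ≤ g (k+1)) :
    ∃ α : ℝ, ∀ k, Int.fract ((g k : ℝ) * α) ∈ Set.Icc (1/4 : ℝ) (3/4) := by
  have hgk : ∀ k, 1 ≤ g k := by
    intro k; induction k with
    | zero => exact hg1
    | succ k ih => have := hg k; omega
  have hgpos : ∀ k, (0:ℝ) < (g k : ℝ) := fun k => by exact_mod_cast (hgk k)
  set a : ℕ → ℝ := fun k => ((katzM g k : ℝ) + 1/4) / (g k : ℝ) with ha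
  set b : ℕ → ℝ := fun k => ((katzM g k : ℝ) + 3/4) / (g k : ℝ) with hb
  have hab : ∀ k, a k < b k := fun k =>
    (div_lt_div_iff_of_pos_right (hgpos k)).2 (by linarith)
  have hmono : ∀ k, a k ≤ a (k+1) ∧ b (k+1) ≤ b k := by
    intro k
    have h3 : (3:ℝ) * (g k : ℝ) ≤ (g (k+1) : ℝ) := by exact_mod_cast hg k
    have hGk : (0:ℝ) < (g k : ℝ) := hgpos k
    have hG1 : (0:ℝ) < (g (k+1) : ℝ) := hgpos (k+1)
    have hmdef : (katzM g (k+1) : ℝ) = (⌈(g (k+1) : ℝ) * a k - 1/4⌉ : ℤ) := by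
      simp [katzM, ha]
    have hle : (g (k+1) : ℝ) * a k - 1/4 ≤ (katzM g (k+1) : ℝ) := by
      rw [hmdef]; exact Int.le_ceil _
    have hlt : (katzM g (k+1) : ℝ) < (g (k+1) : ℝ) * a k - 1/4 + 1 := by
      rw [hmdef]; exact Int.ceil_lt_add_one _
    have hbk : b k = a k + 1/(2*(g k:ℝ)) := by
      rw [ha, hb]; field_simp; ring
    have hq : (3:ℝ)/2 ≤ (g (k+1):ℝ)/(2*(g k:ℝ)) := by
      rw [le_div_iff₀ (by positivity)]; linarith
    constructor
    · have : a k * (g (k+1):ℝ) ≤ (katzM g (k+1) : ℝ) + 1/4 := by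
        linarith [mul_comm ((g (k+1):ℝ)) (a k)]
      calc a k = a k * (g (k+1):ℝ) / (g (k+1):ℝ) := by field_simp
        _ ≤ ((katzM g (k+1) : ℝ) + 1/4) / (g (k+1):ℝ) := by
            exact (div_le_div_iff_of_pos_right hG1).2 this
        _ = a (k+1) := rfl
    · rw [hbk]
      have h2 : (a k + 1/(2*(g k:ℝ)))*(g (k+1):ℝ)
          = a k * (g (k+1):ℝ) + (g (k+1):ℝ)/(2*(g k:ℝ)) := by ring
      show ((katzM g (k+1) : ℝ) + 3/4) / (g (k+1):ℝ) ≤ a k + 1/(2*(g k:ℝ))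
      rw [div_le_iff₀ hG1, h2]
      linarith [mul_comm ((g (k+1):ℝ)) (a k)]
  have hamono : Monotone a := monotone_nat_of_le_succ (fun k => (hmono k).1)
  have hbanti : Antitone b := antitone_nat_of_succ_le (fun k => (hmono k).2)
  have haleb : ∀ k j, a k ≤ b j := by
    intro k j
    rcases le_total k j with h | h
    · exact (hamono h).trans (hab j).le
    · exact (hab k).le.trans (hbanti h)
  have hbdd : BddAbove (Set.range a) := ⟨b 0, by rintro _ ⟨k, rfl⟩; exact haleb k 0⟩
  refine ⟨⨆ k, a k, fun j => ?_⟩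
  have h1 : a j ≤ ⨆ k, a k := le_ciSup hbdd j
  have h2 : (⨆ k, a k) ≤ b j := ciSup_le (fun k => haleb k j)
  set α := ⨆ k, a k
  have hGj : (0:ℝ) < (g j : ℝ) := hgpos j
  have hl : (katzM g j : ℝ) + 1/4 ≤ (g j : ℝ) * α := by
    have := (div_le_iff₀ hGj).1 (le_refl (a j))
    rw [ha] at h1
    calc (katzM g j : ℝ) + 1/4 = ((katzM g j : ℝ) + 1/4)/(g j:ℝ) * (g j:ℝ) := by
          field_simp
      _ ≤ α * (g j:ℝ) := by
          apply mul_le_mul_of_nonneg_right h1 hGj.le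
      _ = (g j:ℝ) * α := mul_comm _ _
  have hr : (g j : ℝ) * α ≤ (katzM g j : ℝ) + 3/4 := by
    rw [hb] at h2
    calc (g j:ℝ) * α = α * (g j:ℝ) := mul_comm _ _
      _ ≤ ((katzM g j : ℝ) + 3/4)/(g j:ℝ) * (g j:ℝ) := mul_le_mul_of_nonneg_right h2 hGj.le
      _ = (katzM g j : ℝ) + 3/4 := by field_simp
  have hfl : ⌊(g j : ℝ) * α⌋ = katzM g j := by
    rw [Int.floor_eq_iff]
    constructor <;> push_cast <;> linarith
  rw [Int.fract]
  rw [hfl]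
  constructor <;> linarith

lemma katz_coloring (g : ℕ → ℕ) (hg1 : 1 ≤ g 0) (hg : ∀ k, 3 * g k ≤ g (k+1)) :
    ∃ x : ℤ → Fin 4, ∀ (i : ℤ) (k : ℕ), x i ≠ x (i + (g k : ℤ)) := by
  obtain ⟨α, hα⟩ := katz_exists_alpha g hg1 hg
  have hx4 : ∀ i : ℤ, (⌊4 * Int.fract ((i:ℝ) * α)⌋).toNat < 4 := by
    intro i
    have h0 : (0:ℝ) ≤ Int.fract ((i:ℝ) * α) := Int.fract_nonneg _
    have h1 : Int.fract ((i:ℝ) * α) < 1 := Int.fract_lt_one _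
    have : ⌊4 * Int.fract ((i:ℝ) * α)⌋ < 4 := by
      apply Int.floor_lt.2; push_cast; linarith
    have h2 : 0 ≤ ⌊4 * Int.fract ((i:ℝ) * α)⌋ := Int.floor_nonneg.2 (by linarith)
    omega
  refine ⟨fun i => ⟨(⌊4 * Int.fract ((i:ℝ) * α)⌋).toNat, hx4 i⟩, fun i k h => ?_⟩
  have hfe : ⌊4 * Int.fract ((i:ℝ) * α)⌋ = ⌊4 * Int.fract (((i + (g k:ℤ)):ℤ) * α)⌋ := by
    have h2 : 0 ≤ ⌊4 * Int.fract ((i:ℝ) * α)⌋ :=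
      Int.floor_nonneg.2 (by linarith [Int.fract_nonneg ((i:ℝ) * α)])
    have h3 : 0 ≤ ⌊4 * Int.fract (((i + (g k:ℤ)):ℤ) * α)⌋ :=
      Int.floor_nonneg.2 (by linarith [Int.fract_nonneg ((((i + (g k:ℤ)):ℤ):ℝ) * α)])
    simp only [Fin.mk.injEq] at h
    omega
  set u := Int.fract ((i:ℝ) * α) with hu
  set v := Int.fract (((i + (g k:ℤ)):ℤ) * α) with hv
  have hdiff : |u - v| < 1/4 := by
    have hju : (⌊4*u⌋:ℝ) ≤ 4*u := Int.floor_le _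
    have hju2 : 4*u < ⌊4*u⌋ + 1 := Int.lt_floor_add_one _
    have hjv : (⌊4*v⌋:ℝ) ≤ 4*v := Int.floor_le _
    have hjv2 : 4*v < ⌊4*v⌋ + 1 := Int.lt_floor_add_one _
    rw [abs_lt]
    rw [hfe] at hju hju2
    constructor <;> linarith
  set w := Int.fract ((g k : ℝ) * α) with hw
  have hwmem := hα k
  obtain ⟨hw1, hw2⟩ := hwmem
  have he : ∃ e : ℤ, v - u = w + e := by
    refine ⟨⌊(g k : ℝ) * α⌋ - ⌊((i + (g k:ℤ)):ℤ) * α⌋ + ⌊(i:ℝ) * α⌋, ?_⟩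
    rw [hu, hv, hw]
    simp only [Int.fract]
    push_cast
    ring
  obtain ⟨e, he⟩ := he
  rw [abs_lt] at hdiff
  rcases le_or_gt 0 e with h0 | h0
  · have : (0:ℝ) ≤ e := by exact_mod_cast h0
    linarith
  · have h1 : e ≤ -1 := by omega
    have : (e:ℝ) ≤ -1 := by exact_mod_cast h1
    linarith

/-- Katznelson: for every lacunary strictly increasing `f : ℕ → ℕ`
(there is `ε > 0` with `f (n+1) ≥ (1+ε) · f n` for all `n ≥ 1`), there is a finite
alphabet size `d` and a two-sided sequence `x : ℤ → Fin d` with `x i ≠ x (i + f n)`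
for all `i ∈ ℤ` and `n ≥ 1`; in other words `X_{(d,f)} ≠ ∅` for some finite `d`. -/
theorem katznelson_lacunary_nonempty
    (f : ℕ → ℕ) (hf : StrictMono f)
    (hlac : ∃ ε : ℝ, 0 < ε ∧ ∀ n : ℕ, 1 ≤ n → (1 + ε) * (f n : ℝ) ≤ (f (n + 1) : ℝ)) :
    ∃ d : ℕ, 1 ≤ d ∧ ∃ x : ℤ → Fin d,
      ∀ (i : ℤ) (n : ℕ), 1 ≤ n → x i ≠ x (i + (f n : ℤ)) := by
  obtain ⟨ε, hε, hl⟩ := hlac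
  obtain ⟨N, hN⟩ := pow_unbounded_of_one_lt (3:ℝ) (by linarith : (1:ℝ) < 1 + ε)
  have hN0 : 0 < N := by
    rcases Nat.eq_zero_or_pos N with h | h
    · rw [h] at hN; norm_num at hN
    · exact h
  have hpow : ∀ j n : ℕ, 1 ≤ n → (1 + ε)^j * (f n : ℝ) ≤ (f (n + j) : ℝ) := by
    intro j
    induction j with
    | zero => intro n hn; simp
    | succ j ih =>
      intro n hn
      have h1 := ih n hn
      have h2 := hl (n + j) (by omega)
      calc (1+ε)^(j+1) * (f n : ℝ) = (1+ε) * ((1+ε)^j * (f n : ℝ)) := by ring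
        _ ≤ (1+ε) * (f (n+j) : ℝ) := by
            apply mul_le_mul_of_nonneg_left h1 (by linarith)
        _ ≤ (f (n+j+1) : ℝ) := h2
  have hstep : ∀ n : ℕ, 1 ≤ n → 3 * f n ≤ f (n + N) := by
    intro n hn
    have h1 := hpow N n hn
    have h2 : (3:ℝ) * (f n : ℝ) ≤ (1+ε)^N * (f n : ℝ) :=
      mul_le_mul_of_nonneg_right hN.le (by positivity)
    have : (3:ℝ) * (f n : ℝ) ≤ (f (n + N) : ℝ) := by linarith
    exact_mod_cast this
  have hsub : ∀ r : Fin N, ∃ x : ℤ → Fin 4,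
      ∀ (i : ℤ) (k : ℕ), x i ≠ x (i + (f (1 + r.val + N * k) : ℤ)) := by
    intro r
    apply katz_coloring (fun k => f (1 + r.val + N * k))
    · have h0 : f 0 < f (1 + r.val + N * 0) := hf (by omega)
      omega
    · intro k
      have : 1 + r.val + N * (k+1) = (1 + r.val + N * k) + N := by ring
      rw [this]
      exact hstep _ (by omega)
  choose xr hxr using hsub
  refine ⟨4^N, Nat.one_le_pow _ _ (by norm_num), ?_⟩
  refine ⟨fun i => finFunctionFinEquiv (fun r => xr r i), ?_⟩
  intro i n hn h
  have hfeq : (fun r => xr r i) = (fun r => xr r (i + (f n : ℤ))) :=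
    finFunctionFinEquiv.injective h
  set r : Fin N := ⟨(n-1) % N, Nat.mod_lt _ hN0⟩
  have hk : 1 + r.val + N * ((n-1)/N) = n := by
    have := Nat.div_add_mod (n-1) N
    simp only [r]
    omega
  have heq := congrFun hfeq r
  have hne := hxr r i ((n-1)/N)
  rw [hk] at hne
  exact hne heq
end

section
/- (Betrand–Mathis) Let D ⊆ ℕ be nonempty. The following are equivalent: (i) D is a Poincaré sequence, i.e. for every probability space (Y, ℬ, μ), every measurable measure-preserving map T : Y → Y, and every measurable B with μ(B) > 0, there exists k ∈ D such that μ(T^{−k}B ∩ B) > 0; (ii) D is intersective, i.e. D ∩ (A − A) ≠ ∅ for every A ⊆ ℕ of positive upper density. -/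
open MeasureTheory

open MeasureTheory Filter Topology
open scoped ENNReal

namespace BMaux

abbrev X := ℕ → Bool

def shift : X → X := fun x n => x (n+1)

lemma continuous_shift : Continuous shift := continuous_pi fun n => continuous_apply (n+1)
lemma measurable_shift : Measurable shift := measurable_pi_iff.mpr fun n => measurable_pi_apply (n+1)

lemma shift_iterate (m : ℕ) (x : X) (n : ℕ) : shift^[m] x n = x (n + m) := by
  induction m generalizing x n with
  | zero => rfl
  | succ m ih =>
    rw [Function.iterate_succ_apply, ih, shift]
    ring_nf

/-- counting function -/
noncomputable def cnt (x₀ : X) (S : Set X) (N : ℕ) : ℝ :=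
  (∑ n ∈ Finset.Icc 1 N, S.indicator (fun _ => (1:ℝ)) (shift^[n] x₀)) / N

lemma indicator_nonneg' (S : Set X) (z : X) : 0 ≤ S.indicator (fun _ => (1:ℝ)) z :=
  Set.indicator_nonneg (fun _ _ => zero_le_one) _

lemma indicator_le_one' (S : Set X) (z : X) : S.indicator (fun _ => (1:ℝ)) z ≤ 1 := by
  by_cases h : z ∈ S <;> simp [Set.indicator_apply, h]

lemma cnt_nonneg (x₀ : X) (S : Set X) (N : ℕ) : 0 ≤ cnt x₀ S N := by
  unfold cnt
  apply div_nonneg _ (Nat.cast_nonneg N)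
  exact Finset.sum_nonneg fun n _ => indicator_nonneg' S _

lemma cnt_sum_le (x₀ : X) (S : Set X) (N : ℕ) :
    ∑ n ∈ Finset.Icc 1 N, S.indicator (fun _ => (1:ℝ)) (shift^[n] x₀) ≤ N := by
  calc ∑ n ∈ Finset.Icc 1 N, S.indicator (fun _ => (1:ℝ)) (shift^[n] x₀)
      ≤ ∑ _n ∈ Finset.Icc 1 N, (1:ℝ) := Finset.sum_le_sum fun n _ => by
        by_cases h : shift^[n] x₀ ∈ S <;> simp [Set.indicator_apply, h]
    _ = N := by simp [Nat.card_Icc]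

lemma cnt_le_one (x₀ : X) (S : Set X) (N : ℕ) : cnt x₀ S N ≤ 1 := by
  unfold cnt
  rcases Nat.eq_zero_or_pos N with h | h
  · simp [h]
  · rw [div_le_one (by positivity)]
    exact cnt_sum_le x₀ S N

lemma cnt_mono (x₀ : X) {S T : Set X} (h' : S ⊆ T) (N : ℕ) : cnt x₀ S N ≤ cnt x₀ T N := by
  unfold cnt
  rcases Nat.eq_zero_or_pos N with h | h
  · simp [h]
  · have hN : (0:ℝ) < N := by exact_mod_cast h
    apply (div_le_div_iff_of_pos_right hN).mpr
    exact Finset.sum_le_sum fun n _ =>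
      Set.indicator_le_indicator_of_subset h' (fun _ => zero_le_one) _

lemma cnt_split (x₀ : X) (S T : Set X) (N : ℕ) :
    cnt x₀ S N = cnt x₀ (S ∩ T) N + cnt x₀ (S \ T) N := by
  unfold cnt
  rw [← add_div]
  congr 1
  rw [← Finset.sum_add_distrib]
  apply Finset.sum_congr rfl
  intro n _
  set z := shift^[n] x₀
  by_cases h1 : z ∈ S <;> by_cases h2 : z ∈ T <;>
    simp [Set.indicator_apply, h1, h2, Set.mem_inter_iff, Set.mem_diff]

lemma cnt_univ (x₀ : X) {N : ℕ} (h : 1 ≤ N) : cnt x₀ Set.univ N = 1 := by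
  unfold cnt
  simp only [Set.indicator_univ]
  rw [Finset.sum_const, Nat.card_Icc]
  simp only [Nat.add_sub_cancel, nsmul_eq_mul, mul_one]
  rw [div_self]
  exact Nat.cast_ne_zero.mpr (by omega)

lemma cnt_empty (x₀ : X) (N : ℕ) : cnt x₀ ∅ N = 0 := by
  unfold cnt; simp

lemma cnt_shift_diff (x₀ : X) (S : Set X) (N : ℕ) (hN : 1 ≤ N) :
    |cnt x₀ (shift ⁻¹' S) N - cnt x₀ S N| ≤ 1 / N := by
  unfold cnt
  set g : ℕ → ℝ := fun n => S.indicator (fun _ => (1:ℝ)) (shift^[n] x₀) with hg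
  have hg0 : ∀ n, 0 ≤ g n := fun n => indicator_nonneg' S _
  have hg1 : ∀ n, g n ≤ 1 := fun n => by
    by_cases h : shift^[n] x₀ ∈ S <;> simp [hg, Set.indicator_apply, h]
  have key : ∑ n ∈ Finset.Icc 1 N, (shift ⁻¹' S).indicator (fun _ => (1:ℝ)) (shift^[n] x₀)
      = ∑ n ∈ Finset.Icc 2 (N+1), g n := by
    rw [show Finset.Icc 2 (N+1) = Finset.map (addRightEmbedding 1) (Finset.Icc 1 N) by
      rw [Finset.map_add_right_Icc]]
    rw [Finset.sum_map]
    apply Finset.sum_congr rfl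
    intro n _
    simp only [addRightEmbedding_apply, hg]
    have e : shift^[n] (shift x₀) = shift (shift^[n] x₀) := by
      rw [← Function.iterate_succ_apply, Function.iterate_succ_apply']
    show _ = S.indicator _ (shift^[n+1] x₀)
    rw [Function.iterate_succ_apply, e]
    by_cases h : shift (shift^[n] x₀) ∈ S
    · rw [Set.indicator_of_mem h, Set.indicator_of_mem (Set.mem_preimage.mpr h)]
    · rw [Set.indicator_of_notMem h,
        Set.indicator_of_notMem (fun hc => h (Set.mem_preimage.mp hc))]
  rw [key]
  have split1 : ∑ n ∈ Finset.Icc 1 (N+1), g n = (∑ n ∈ Finset.Icc 1 N, g n) + g (N+1) :=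
    Finset.sum_Icc_succ_top (by omega) g
  have split2 : ∑ n ∈ Finset.Icc 1 (N+1), g n = g 1 + ∑ n ∈ Finset.Icc 2 (N+1), g n := by
    rw [show Finset.Icc 2 (N+1) = Finset.Ioc 1 (N+1) from (Finset.Icc_add_one_left_eq_Ioc 1 (N+1)).symm ▸ rfl]
    rw [Finset.Icc_eq_cons_Ioc (by omega), Finset.sum_cons]
  have habs : |(∑ n ∈ Finset.Icc 2 (N+1), g n) - ∑ n ∈ Finset.Icc 1 N, g n| ≤ 1 := by
    rw [abs_le]
    constructor
    · nlinarith [hg0 1, hg1 1, hg0 (N+1), hg1 (N+1)]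
    · nlinarith [hg0 1, hg1 1, hg0 (N+1), hg1 (N+1)]
  rw [div_sub_div_same, abs_div, abs_of_nonneg (Nat.cast_nonneg N : (0:ℝ) ≤ N)]
  have hN' : (0:ℝ) < N := by exact_mod_cast hN
  exact (div_le_div_iff_of_pos_right hN').mpr habs

end BMaux

namespace BMaux2
open Set Filter

lemma natcard_inter (A : Set ℕ) (N : ℕ) [DecidablePred (· ∈ A)] :
    Nat.card ↥(A ∩ Set.Icc 1 N) = ((Finset.Icc 1 N).filter (· ∈ A)).card := by
  have h : A ∩ Set.Icc 1 N = ↑((Finset.Icc 1 N).filter (· ∈ A)) := by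
    ext n
    simp only [Finset.coe_filter, Finset.mem_Icc, Set.mem_inter_iff, Set.mem_Icc, Set.mem_setOf_eq]
    tauto
  rw [h, Nat.card_coe_set_eq, Set.ncard_coe_finset]

lemma natcard_inter_le (A : Set ℕ) (N : ℕ) : Nat.card ↥(A ∩ Set.Icc 1 N) ≤ N := by
  classical
  rw [natcard_inter]
  calc ((Finset.Icc 1 N).filter (· ∈ A)).card ≤ (Finset.Icc 1 N).card :=
        Finset.card_filter_le _ _
    _ = N := by simp [Nat.card_Icc]

lemma sum_indicator_eq_card {M : Type*} [Semiring M] (A : Set ℕ) (N : ℕ)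
    [DecidablePred (· ∈ A)] :
    ∑ n ∈ Finset.Icc 1 N, A.indicator (fun _ => (1:M)) n
      = (((Finset.Icc 1 N).filter (· ∈ A)).card : M) := by
  rw [← Finset.sum_filter_add_sum_filter_not (Finset.Icc 1 N) (· ∈ A)]
  have h1 : ∑ n ∈ (Finset.Icc 1 N).filter (· ∈ A), A.indicator (fun _ => (1:M)) n
      = ∑ _n ∈ (Finset.Icc 1 N).filter (· ∈ A), (1:M) :=
    Finset.sum_congr rfl fun n hn => Set.indicator_of_mem (Finset.mem_filter.mp hn).2 _
  have h2 : ∑ n ∈ (Finset.Icc 1 N).filter (fun n => ¬ n ∈ A), A.indicator (fun _ => (1:M)) n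
      = 0 :=
    Finset.sum_eq_zero fun n hn => Set.indicator_of_notMem (Finset.mem_filter.mp hn).2 _
  rw [h1, h2, add_zero, Finset.sum_const, nsmul_eq_mul, mul_one]

lemma natcard_eq_sum {M : Type*} [Semiring M] (A : Set ℕ) (N : ℕ) :
    ((Nat.card ↥(A ∩ Set.Icc 1 N)) : M) = ∑ n ∈ Finset.Icc 1 N, A.indicator (fun _ => (1:M)) n := by
  classical
  rw [natcard_inter, sum_indicator_eq_card]

lemma indicator_congr_mem {M : Type*} [Zero M] [One M] {α β : Type*} {S : Set α} {T : Set β}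
    {a : α} {b : β} (h : a ∈ S ↔ b ∈ T) :
    S.indicator (fun _ => (1:M)) a = T.indicator (fun _ => (1:M)) b := by
  by_cases hm : a ∈ S
  · rw [Set.indicator_of_mem hm, Set.indicator_of_mem (h.mp hm)]
  · rw [Set.indicator_of_notMem hm, Set.indicator_of_notMem (fun hc => hm (h.mpr hc))]

end BMaux2


/-- The upper density of a set `A ⊆ ℕ = {1,2,...}`:
`limsup_{N→∞} |A ∩ {1,...,N}| / N`. -/
noncomputable def upperDensity (A : Set ℕ) : ℝ :=
  Filter.limsup (fun N : ℕ => (Nat.card ↥(A ∩ Set.Icc 1 N) : ℝ) / (N : ℝ)) Filter.atTop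

/-- Betrand–Mathis: a nonempty set `D` of positive integers is a Poincaré
sequence (for every probability space `(Y,ℬ,μ)`, measurable measure-preserving
`T : Y → Y` and measurable `B` with `μ B > 0` there is `k ∈ D` with
`μ (T^{-k} B ∩ B) > 0`) if and only if `D` is intersective
(`D ∩ (A − A) ≠ ∅` for every `A ⊆ ℕ` of positive upper density). -/
theorem betrand_mathis (D : Set ℕ) (hD : D.Nonempty) (hD1 : ∀ k ∈ D, 1 ≤ k) :
    (∀ (Y : Type) (_ : MeasurableSpace Y) (μ : Measure Y),
        IsProbabilityMeasure μ →
        ∀ T : Y → Y, MeasurePreserving T μ μ →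
        ∀ B : Set Y, MeasurableSet B → 0 < μ B →
        ∃ k ∈ D, 0 < μ ((T^[k]) ⁻¹' B ∩ B)) ↔
    (∀ A : Set ℕ, 0 < upperDensity A → ∃ k ∈ D, ∃ a ∈ A, ∃ a' ∈ A, a = a' + k) := by
  constructor
  · intro hpoin A hA
    by_contra hcon
    push_neg at hcon
    classical
    set u : ℕ → ℝ := fun N => (Nat.card ↥(A ∩ Set.Icc 1 N) : ℝ) / (N : ℝ) with hu
    have hu0 : ∀ N, 0 ≤ u N := fun N => by positivity
    have hu1 : ∀ N, u N ≤ 1 := by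
      intro N
      rcases Nat.eq_zero_or_pos N with h0 | h0
      · simp [hu, h0]
      · rw [hu]
        simp only
        rw [div_le_one (by exact_mod_cast h0)]
        exact_mod_cast BMaux2.natcard_inter_le A N
    have hubdd : Filter.IsBoundedUnder (· ≤ ·) Filter.atTop u :=
      Filter.isBoundedUnder_of ⟨1, hu1⟩
    have hlimsup : upperDensity A = Filter.limsup u Filter.atTop := rfl
    have hubdd2 : Filter.IsBoundedUnder (· ≥ ·) Filter.atTop u :=
      Filter.isBoundedUnder_of ⟨0, hu0⟩
    have hfreq : ∃ᶠ N in Filter.atTop, upperDensity A / 2 < u N := by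
      refine Filter.frequently_lt_of_lt_limsup hubdd2.isCoboundedUnder_le ?_
      rw [← hlimsup]
      exact half_lt_self hA
    have hinf : (Filter.atTop ⊓ Filter.principal {N | upperDensity A / 2 < u N}).NeBot :=
      Filter.frequently_iff_neBot.mp hfreq
    set V : Ultrafilter ℕ :=
      Ultrafilter.of (Filter.atTop ⊓ Filter.principal {N | upperDensity A / 2 < u N}) with hV
    have hVle : (V : Filter ℕ) ≤ Filter.atTop := (Ultrafilter.of_le _).trans inf_le_left
    have hVmem : {N | upperDensity A / 2 < u N} ∈ V :=
      ((Ultrafilter.of_le _).trans inf_le_right) (Filter.mem_principal_self _)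
    set x₀ : BMaux.X := fun n => decide (n ∈ A) with hx₀
    have hx₀mem : ∀ n, (x₀ n = true) ↔ n ∈ A := fun n => by rw [hx₀]; simp
    -- ultrafilter limits of counting averages
    have hex : ∀ S : Set BMaux.X, ∃ L : ℝ,
        Filter.Tendsto (BMaux.cnt x₀ S) (V : Filter ℕ) (𝓝 L) := by
      intro S
      obtain ⟨L, -, hL⟩ := (isCompact_Icc (a := (0:ℝ)) (b := 1)).ultrafilter_le_nhds
        (V.map (BMaux.cnt x₀ S)) (by
          rw [Ultrafilter.coe_map]
          refine Filter.le_principal_iff.mpr ?_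
          rw [Filter.mem_map]
          refine Filter.univ_mem' fun N => ?_
          exact ⟨BMaux.cnt_nonneg x₀ S N, BMaux.cnt_le_one x₀ S N⟩)
      exact ⟨L, by rwa [Ultrafilter.coe_map] at hL⟩
    choose G hG using hex
    have Gnn : ∀ S, 0 ≤ G S := fun S =>
      ge_of_tendsto (hG S) (Filter.Eventually.of_forall fun N => BMaux.cnt_nonneg x₀ S N)
    have Gsplit : ∀ S T, G S = G (S ∩ T) + G (S \ T) := by
      intro S T
      have h2 := (hG (S ∩ T)).add (hG (S \ T))
      rw [show (fun N => BMaux.cnt x₀ (S ∩ T) N + BMaux.cnt x₀ (S \ T) N) = BMaux.cnt x₀ S from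
        funext fun N => (BMaux.cnt_split x₀ S T N).symm] at h2
      exact tendsto_nhds_unique (hG S) h2
    have Gmono : ∀ {S T}, S ⊆ T → G S ≤ G T := by
      intro S T h
      exact le_of_tendsto_of_tendsto' (hG S) (hG T) fun N => BMaux.cnt_mono x₀ h N
    have Guniv : G Set.univ = 1 := by
      refine tendsto_nhds_unique (hG Set.univ) ?_
      have h1 : ∀ᶠ N in (V : Filter ℕ), BMaux.cnt x₀ Set.univ N = 1 :=
        (Filter.Eventually.filter_mono hVle (Filter.eventually_ge_atTop 1)).mono
          fun N hN => BMaux.cnt_univ x₀ hN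
      exact Filter.Tendsto.congr' (h1.mono fun N hN => hN.symm) tendsto_const_nhds
    have Gshift : ∀ S, G (BMaux.shift ⁻¹' S) = G S := by
      intro S
      have hdiff : Filter.Tendsto
          (fun N => BMaux.cnt x₀ (BMaux.shift ⁻¹' S) N - BMaux.cnt x₀ S N)
          Filter.atTop (𝓝 0) := by
        refine squeeze_zero_norm' ?_ tendsto_one_div_atTop_nhds_zero_nat
        refine (Filter.eventually_ge_atTop 1).mono fun N hN => ?_
        rw [Real.norm_eq_abs]
        exact BMaux.cnt_shift_diff x₀ S N hN
      have h2 := (hG S).add (hdiff.mono_left hVle)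
      rw [add_zero] at h2
      refine tendsto_nhds_unique (hG _) (h2.congr fun N => ?_)
      ring
    -- the cylinder algebra
    set 𝒞 : Set (Set BMaux.X) := {S | IsClopen S ∧ MeasurableSet S} with h𝒞
    set fC : Set BMaux.X → ℝ≥0∞ := fun S => if S ∈ 𝒞 then ENNReal.ofReal (G S) else ⊤ with hfC
    have hC_inter : ∀ {S T}, S ∈ 𝒞 → T ∈ 𝒞 → S ∩ T ∈ 𝒞 := fun hS hT =>
      ⟨hS.1.inter hT.1, hS.2.inter hT.2⟩
    have hC_diff : ∀ {S T}, S ∈ 𝒞 → T ∈ 𝒞 → S \ T ∈ 𝒞 := fun hS hT =>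
      ⟨hS.1.diff hT.1, hS.2.diff hT.2⟩
    have hGempty : G ∅ = 0 :=
      tendsto_nhds_unique (hG ∅)
        (by
          rw [show BMaux.cnt x₀ ∅ = fun _ => (0:ℝ) from funext fun N => BMaux.cnt_empty x₀ N]
          exact tendsto_const_nhds)
    have hfC0 : fC ∅ = 0 := by
      rw [hfC]
      simp only
      rw [if_pos ⟨isClopen_empty, MeasurableSet.empty⟩, hGempty]
      simp
    set m : OuterMeasure BMaux.X := OuterMeasure.ofFunction fC hfC0 with hm
    have hGsub : ∀ (F : Finset ℕ) (U : ℕ → Set BMaux.X) (S : Set BMaux.X),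
        S ⊆ ⋃ i ∈ F, U i → G S ≤ ∑ i ∈ F, G (U i) := by
      intro F
      induction F using Finset.induction_on with
      | empty =>
        intro U S hsub
        simp only [Finset.notMem_empty, Set.iUnion_of_empty, Set.iUnion_empty] at hsub
        rw [Set.subset_empty_iff.mp hsub, hGempty, Finset.sum_empty]
      | insert a F ha ih =>
        intro U S hsub
        rw [Finset.sum_insert ha]
        have hS : G S = G (S ∩ U a) + G (S \ U a) := Gsplit S (U a)
        have h1 : G (S ∩ U a) ≤ G (U a) := Gmono Set.inter_subset_right
        have h2 : G (S \ U a) ≤ ∑ i ∈ F, G (U i) := by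
          refine ih U (S \ U a) fun x hx => ?_
          have := hsub hx.1
          rw [Finset.set_biUnion_insert] at this
          rcases this with h | h
          · exact absurd h hx.2
          · exact h
        linarith
    have hm_eq : ∀ S ∈ 𝒞, m S = ENNReal.ofReal (G S) := by
      intro S hS
      refine le_antisymm ?_ ?_
      · have h2 : fC S = ENNReal.ofReal (G S) := by
          rw [hfC]
          exact if_pos hS
        exact le_trans (OuterMeasure.ofFunction_le (m := fC) (m_empty := hfC0) S) (le_of_eq h2)
      · rw [hm, OuterMeasure.ofFunction_apply]
        refine le_iInf fun C => le_iInf fun hcov => ?_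
        by_cases hall : ∀ i : ℕ, C i ∈ 𝒞
        · obtain ⟨F, hF⟩ := (hS.1.isClosed.isCompact).elim_finite_subcover C
            (fun i => (hall i).1.isOpen) hcov
          calc ENNReal.ofReal (G S) ≤ ENNReal.ofReal (∑ i ∈ F, G (C i)) :=
                ENNReal.ofReal_le_ofReal (hGsub F C S hF)
            _ = ∑ i ∈ F, ENNReal.ofReal (G (C i)) :=
                ENNReal.ofReal_sum_of_nonneg fun i _ => Gnn (C i)
            _ = ∑ i ∈ F, fC (C i) := Finset.sum_congr rfl fun i _ => by
                rw [hfC]; simp only [if_pos (hall i)]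
            _ ≤ ∑' i, fC (C i) := ENNReal.sum_le_tsum F
        · push_neg at hall
          obtain ⟨i, hi⟩ := hall
          have : (⊤:ℝ≥0∞) ≤ ∑' i, fC (C i) := by
            refine le_trans (le_of_eq ?_) (ENNReal.le_tsum i)
            rw [hfC]
            simp only [if_neg hi]
          exact le_trans le_top this
    have hsplitC : ∀ E ∈ 𝒞, ∀ t, fC (t ∩ E) + fC (t \ E) ≤ fC t := by
      intro E hE t
      by_cases ht : t ∈ 𝒞
      · rw [hfC]
        simp only [if_pos ht, if_pos (hC_inter ht hE), if_pos (hC_diff ht hE)]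
        rw [← ENNReal.ofReal_add (Gnn _) (Gnn _)]
        exact ENNReal.ofReal_le_ofReal (le_of_eq (Gsplit t E).symm)
      · rw [hfC]
        simp only [if_neg ht]
        exact le_top
    have hgen : (inferInstance : MeasurableSpace BMaux.X) = MeasurableSpace.generateFrom 𝒞 := by
      refine le_antisymm ?_ (MeasurableSpace.generateFrom_le fun S hS => hS.2)
      have hpi : (inferInstance : MeasurableSpace BMaux.X) = MeasurableSpace.pi := rfl
      rw [hpi, MeasurableSpace.pi]
      refine iSup_le fun n => ?_
      rw [MeasurableSpace.le_def]
      intro S hS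
      obtain ⟨T, -, rfl⟩ := hS
      refine MeasurableSpace.measurableSet_generateFrom ?_
      exact ⟨(isClopen_discrete T).preimage (continuous_apply n),
        measurable_pi_apply n ((Set.to_countable T).measurableSet)⟩
    have hle : (inferInstance : MeasurableSpace BMaux.X) ≤ m.caratheodory := by
      rw [hgen]
      refine MeasurableSpace.generateFrom_le fun S hS => ?_
      exact OuterMeasure.ofFunction_caratheodory fun t => hsplitC S hS t
    set μ : Measure BMaux.X := m.toMeasure hle with hμdef
    have hμ_eq : ∀ S ∈ 𝒞, μ S = ENNReal.ofReal (G S) := fun S hS => by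
      rw [hμdef, MeasureTheory.toMeasure_apply _ _ hS.2, hm_eq S hS]
    have hμP : IsProbabilityMeasure μ :=
      ⟨by rw [hμ_eq Set.univ ⟨isClopen_univ, MeasurableSet.univ⟩, Guniv]; simp⟩
    have hσme : Measurable BMaux.shift := BMaux.measurable_shift
    have hmp : MeasurePreserving BMaux.shift μ μ := by
      refine ⟨hσme, ?_⟩
      haveI := hμP
      haveI : IsProbabilityMeasure (μ.map BMaux.shift) :=
        Measure.isProbabilityMeasure_map hσme.aemeasurable
      refine MeasureTheory.ext_of_generate_finite 𝒞 hgen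
        (fun S hS T hT _ => hC_inter hS hT) (fun S hS => ?_) (by simp [measure_univ])
      rw [Measure.map_apply hσme hS.2,
        hμ_eq _ ⟨hS.1.preimage BMaux.continuous_shift, hσme hS.2⟩, hμ_eq S hS, Gshift]
    set B : Set BMaux.X := (fun x : BMaux.X => x 0) ⁻¹' {true} with hBdef
    have hB𝒞 : B ∈ 𝒞 :=
      ⟨(isClopen_discrete {true}).preimage (continuous_apply 0),
        measurable_pi_apply 0 ((Set.to_countable {true}).measurableSet)⟩
    have hmemB : ∀ n, (BMaux.shift^[n] x₀ ∈ B) ↔ n ∈ A := by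
      intro n
      rw [hBdef]
      simp only [Set.mem_preimage, Set.mem_singleton_iff]
      rw [BMaux.shift_iterate, zero_add]
      exact hx₀mem n
    have hcntB : ∀ N, BMaux.cnt x₀ B N = u N := by
      intro N
      rw [hu]
      simp only
      rw [BMaux2.natcard_eq_sum (M := ℝ)]
      unfold BMaux.cnt
      congr 1
      refine Finset.sum_congr rfl fun n _ => ?_
      exact BMaux2.indicator_congr_mem (hmemB n)
    have hGB : upperDensity A / 2 ≤ G B := by
      refine ge_of_tendsto (hG B) ?_
      have : ∀ᶠ N in (V : Filter ℕ), upperDensity A / 2 < u N := hVmem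
      exact this.mono fun N hN => by rw [hcntB N]; exact hN.le
    have hBpos : 0 < μ B := by
      rw [hμ_eq B hB𝒞]
      exact ENNReal.ofReal_pos.mpr (lt_of_lt_of_le (half_pos hA) hGB)
    haveI := hμP
    obtain ⟨k, hk, hkpos⟩ := hpoin BMaux.X inferInstance μ hμP BMaux.shift hmp B hB𝒞.2 hBpos
    have hSk𝒞 : (BMaux.shift^[k]) ⁻¹' B ∩ B ∈ 𝒞 := by
      refine hC_inter ⟨?_, ?_⟩ hB𝒞
      · exact hB𝒞.1.preimage (BMaux.continuous_shift.iterate k)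
      · exact (hσme.iterate k) hB𝒞.2
    have hcnt0 : ∀ N, BMaux.cnt x₀ ((BMaux.shift^[k]) ⁻¹' B ∩ B) N = 0 := by
      intro N
      unfold BMaux.cnt
      rw [Finset.sum_eq_zero, zero_div]
      intro n _
      refine Set.indicator_of_notMem ?_ _
      rintro ⟨h1, h2⟩
      rw [Set.mem_preimage, ← Function.iterate_add_apply] at h1
      rw [hmemB] at h2
      have h1' : k + n ∈ A := (hmemB (k + n)).mp h1
      exact hcon k hk (k + n) h1' n h2 (by omega)
    have hG0 : G ((BMaux.shift^[k]) ⁻¹' B ∩ B) = 0 :=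
      tendsto_nhds_unique (hG _)
        (by
          rw [show BMaux.cnt x₀ ((BMaux.shift^[k]) ⁻¹' B ∩ B) = fun _ => (0:ℝ) from
            funext hcnt0]
          exact tendsto_const_nhds)
    have : μ ((BMaux.shift^[k]) ⁻¹' B ∩ B) = 0 := by
      rw [hμ_eq _ hSk𝒞, hG0]
      simp
    rw [this] at hkpos
    exact lt_irrefl _ hkpos

  · intro hint Y mY μ hμ T hT B hB hBpos
    by_contra hno
    push_neg at hno
    have hzero : ∀ k ∈ D, μ ((T^[k]) ⁻¹' B ∩ B) = 0 := fun k hk =>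
      le_antisymm (hno k hk) (zero_le)
    set Sk : ℕ → Set Y := fun k => (T^[k]) ⁻¹' B ∩ B with hSk
    have hSkm : ∀ k, MeasurableSet (Sk k) := fun k => ((hT.measurable.iterate k) hB).inter hB
    set Z : Set Y := ⋃ k ∈ D, ⋃ n : ℕ, (T^[n]) ⁻¹' (Sk k) with hZdef
    have hZm : MeasurableSet Z := MeasurableSet.biUnion (Set.to_countable D) fun k _ =>
      MeasurableSet.iUnion fun n => (hT.measurable.iterate n) (hSkm k)
    have hZ0 : μ Z = 0 := by
      rw [hZdef]
      refine (measure_biUnion_null_iff (Set.to_countable D)).mpr fun k hk => ?_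
      refine measure_iUnion_null fun n => ?_
      rw [(hT.iterate n).measure_preimage (hSkm k).nullMeasurableSet]
      exact hzero k hk
    -- ergodic averages
    set f : ℕ → Y → ℝ≥0∞ := fun N y =>
      (N : ℝ≥0∞)⁻¹ * ∑ n ∈ Finset.Icc 1 N, ((T^[n]) ⁻¹' B).indicator (fun _ => (1:ℝ≥0∞)) y
      with hfdef
    have hfmeas : ∀ N, Measurable (f N) := fun N => by
      apply Measurable.const_mul
      exact Finset.measurable_sum _ fun n _ =>
        Measurable.indicator measurable_const ((hT.measurable.iterate n) hB)
    have hfle1 : ∀ N y, f N y ≤ 1 := by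
      intro N y
      rcases Nat.eq_zero_or_pos N with h | h
      · simp [hfdef, h]
      · have hsum : ∑ n ∈ Finset.Icc 1 N, ((T^[n]) ⁻¹' B).indicator (fun _ => (1:ℝ≥0∞)) y
            ≤ N := by
          calc ∑ n ∈ Finset.Icc 1 N, ((T^[n]) ⁻¹' B).indicator (fun _ => (1:ℝ≥0∞)) y
              ≤ ∑ _n ∈ Finset.Icc 1 N, (1:ℝ≥0∞) := Finset.sum_le_sum fun n _ =>
                Set.indicator_le_self' (fun _ _ => zero_le_one) y |>.trans (le_refl _)
            _ = N := by simp [Nat.card_Icc]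
        calc f N y ≤ (N : ℝ≥0∞)⁻¹ * N := by
              rw [hfdef]; exact mul_le_mul_right hsum _
          _ = 1 := ENNReal.inv_mul_cancel (Nat.cast_ne_zero.mpr (by omega)) (ENNReal.natCast_ne_top N)
    have hfint : ∀ N, 1 ≤ N → ∫⁻ y, f N y ∂μ = μ B := by
      intro N hN
      rw [hfdef]
      simp only
      rw [lintegral_const_mul _ (Finset.measurable_sum _ fun n _ =>
        Measurable.indicator measurable_const ((hT.measurable.iterate n) hB))]
      rw [lintegral_finset_sum _ fun n _ =>
        Measurable.indicator measurable_const ((hT.measurable.iterate n) hB)]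
      have : ∀ n, ∫⁻ y, ((T^[n]) ⁻¹' B).indicator (fun _ => (1:ℝ≥0∞)) y ∂μ = μ B := by
        intro n
        rw [lintegral_indicator ((hT.measurable.iterate n) hB)]
        simp only [lintegral_const, one_mul]
        rw [Measure.restrict_apply_univ]
        exact (hT.iterate n).measure_preimage hB.nullMeasurableSet
      rw [Finset.sum_congr rfl fun n _ => this n, Finset.sum_const, Nat.card_Icc]
      simp only [Nat.add_sub_cancel, nsmul_eq_mul]
      rw [← mul_assoc, ENNReal.inv_mul_cancel (Nat.cast_ne_zero.mpr (by omega)) (ENNReal.natCast_ne_top N), one_mul]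
    -- reverse Fatou
    have hfatou : μ B ≤ ∫⁻ y, Filter.limsup (fun N => f N y) Filter.atTop ∂μ := by
      have h1 : Filter.limsup (fun N => ∫⁻ y, f N y ∂μ) Filter.atTop = μ B := by
        have : (fun N => ∫⁻ y, f N y ∂μ) =ᶠ[Filter.atTop] fun _ => μ B :=
          Filter.eventually_atTop.mpr ⟨1, fun N hN => hfint N hN⟩
        rw [Filter.limsup_congr this, Filter.limsup_const]
      calc μ B = Filter.limsup (fun N => ∫⁻ y, f N y ∂μ) Filter.atTop := h1.symm
        _ ≤ ∫⁻ y, Filter.limsup (fun N => f N y) Filter.atTop ∂μ := by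
            refine limsup_lintegral_le (fun _ => (1:ℝ≥0∞)) hfmeas
              (fun N => Filter.Eventually.of_forall (fun y => hfle1 N y)) ?_
            simp [measure_univ]
    set h : Y → ℝ≥0∞ := fun y => Filter.limsup (fun N => f N y) Filter.atTop with hhdef
    have hh1 : ∀ y, h y ≤ 1 := fun y =>
      Filter.limsup_le_of_le (by isBoundedDefault)
        (Filter.Eventually.of_forall fun N => hfle1 N y)
    -- points outside Z have zero limsup
    have hkey : ∀ y, y ∉ Z → h y = 0 := by
      intro y hyZ
      by_contra hne
      set Ay : Set ℕ := {m | T^[m] y ∈ B} with hAy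
      -- f N y in terms of Nat.card
      have hfq : ∀ N : ℕ, f N y
          = ((Nat.card ↥(Ay ∩ Set.Icc 1 N) : ℕ) : ℝ≥0∞) / N := by
        intro N
        rw [hfdef]
        simp only
        rw [BMaux2.natcard_eq_sum, ENNReal.div_eq_inv_mul]
        congr 1
      have hhtop : h y ≠ ⊤ := ((hh1 y).trans_lt ENNReal.one_lt_top).ne
      have hhalf : h y / 2 < h y := ENNReal.half_lt_self hne hhtop
      have hfreq : ∃ᶠ N in Filter.atTop, h y / 2 < f N y :=
        Filter.frequently_lt_of_lt_limsup (by isBoundedDefault) hhalf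
      have hfreq2 : ∃ᶠ N in Filter.atTop, (h y / 2 < f N y) ∧ 1 ≤ N :=
        hfreq.and_eventually (Filter.eventually_ge_atTop 1)
      have hhalf_ne_top : h y / 2 ≠ ⊤ :=
        (ENNReal.div_lt_top hhtop (by norm_num)).ne
      have hq : ∃ᶠ N in Filter.atTop,
          (h y / 2).toReal ≤ (Nat.card ↥(Ay ∩ Set.Icc 1 N) : ℝ) / (N : ℝ) := by
        refine hfreq2.mono ?_
        rintro N ⟨hlt, hN1⟩
        rw [hfq N] at hlt
        have hfin : ((Nat.card ↥(Ay ∩ Set.Icc 1 N) : ℕ) : ℝ≥0∞) / N ≠ ⊤ :=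
          (ENNReal.div_lt_top (ENNReal.natCast_ne_top _)
            (Nat.cast_ne_zero.mpr (by omega))).ne
        have := (ENNReal.toReal_lt_toReal hhalf_ne_top hfin).mpr hlt
        have e : (((Nat.card ↥(Ay ∩ Set.Icc 1 N) : ℕ) : ℝ≥0∞) / N).toReal
            = (Nat.card ↥(Ay ∩ Set.Icc 1 N) : ℝ) / (N : ℝ) := by
          simp [ENNReal.toReal_div, ENNReal.toReal_natCast]
        rw [e] at this
        exact this.le
      have hbdd : Filter.IsBoundedUnder (· ≤ ·) Filter.atTop
          (fun N : ℕ => (Nat.card ↥(Ay ∩ Set.Icc 1 N) : ℝ) / (N : ℝ)) := by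
        refine Filter.isBoundedUnder_of ⟨1, fun N => ?_⟩
        rcases Nat.eq_zero_or_pos N with h0 | h0
        · simp [h0]
        · rw [div_le_one (by exact_mod_cast h0)]
          exact_mod_cast BMaux2.natcard_inter_le Ay N
      have hud : 0 < upperDensity Ay := by
        have hle := Filter.le_limsup_of_frequently_le hq hbdd
        have hpos : 0 < (h y / 2).toReal :=
          ENNReal.toReal_pos (by simpa using hhalf.ne_bot) hhalf_ne_top
        exact hpos.trans_le hle
      obtain ⟨k, hk, a, ha, a', ha', heq⟩ := hint Ay hud
      apply hyZ
      rw [hZdef]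
      refine Set.mem_biUnion hk (Set.mem_iUnion.mpr ⟨a', ?_⟩)
      refine Set.mem_preimage.mpr ⟨?_, ha'⟩
      rw [Set.mem_preimage, ← Function.iterate_add_apply]
      have : k + a' = a := by omega
      rw [this]
      exact ha
    -- conclude
    have hle : ∀ y, h y ≤ Z.indicator (fun _ => (1:ℝ≥0∞)) y := by
      intro y
      by_cases hy : y ∈ Z
      · rw [Set.indicator_of_mem hy]; exact hh1 y
      · rw [hkey y hy]; exact zero_le
    have : μ B ≤ 0 := by
      calc μ B ≤ ∫⁻ y, h y ∂μ := hfatou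
        _ ≤ ∫⁻ y, Z.indicator (fun _ => (1:ℝ≥0∞)) y ∂μ := lintegral_mono hle
        _ = μ Z := by
            rw [lintegral_indicator hZm]
            simp
        _ = 0 := hZ0
    exact absurd (le_antisymm this (zero_le)) hBpos.ne'
end

section
/- Fix an integer r ≥ 2 and let f(n) = n^r. Then there is no one-sided sequence x : ℕ → Fin 2 with x_i ≠ x_{i+n^r} for all i, n ∈ ℕ; in particular X_{(2,n^r)} = ∅. -/
lemma fin2_trans : ∀ (a b c : Fin 2), a ≠ b → b ≠ c → a = c := by decide

/-- fix an integer `r ≥ 2` and take the jump sequence `f n = n^r`. There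
is no one-sided sequence `x : ℕ → Fin 2` with `x i ≠ x (i + n^r)` for all `i, n ≥ 1`;
in particular the two-sided space `X_{(2,n^r)}` is empty. -/
theorem two_symbols_power_jump_empty (r : ℕ) (hr : 2 ≤ r) :
    (¬ ∃ x : ℕ → Fin 2, ∀ i n : ℕ, 1 ≤ i → 1 ≤ n → x i ≠ x (i + n ^ r)) ∧
    (¬ ∃ x : ℤ → Fin 2, ∀ (i : ℤ) (n : ℕ), 1 ≤ n → x i ≠ x (i + (n : ℤ) ^ r)) := by
  constructor
  · rintro ⟨x, h⟩
    have step : ∀ i : ℕ, 1 ≤ i → x i ≠ x (i + 1) := by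
      intro i hi
      have := h i 1 hi le_rfl
      simpa using this
    have even : ∀ k : ℕ, x 1 = x (1 + 2 * k) := by
      intro k
      induction k with
      | zero => simp
      | succ k ih =>
        have h1 := step (1 + 2 * k) (by omega)
        have h2 := step (1 + 2 * k + 1) (by omega)
        have : x (1 + 2 * k) = x (1 + 2 * k + 1 + 1) := fin2_trans _ _ _ h1 h2
        rw [ih, this]
        ring_nf
    have hpow : 2 ^ r = 2 * 2 ^ (r - 1) := by
      rw [← pow_succ']
      congr 1
      omega
    have := even (2 ^ (r - 1))
    rw [← hpow] at this
    exact h 1 2 le_rfl (by norm_num) this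
  · rintro ⟨x, h⟩
    have step : ∀ i : ℤ, x i ≠ x (i + 1) := by
      intro i
      have := h i 1 le_rfl
      simpa using this
    have even : ∀ k : ℕ, x 0 = x (0 + 2 * k) := by
      intro k
      induction k with
      | zero => simp
      | succ k ih =>
        have h1 := step (0 + 2 * (k : ℤ))
        have h2 := step (0 + 2 * (k : ℤ) + 1)
        have heq : x (0 + 2 * (k : ℤ)) = x (0 + 2 * (k : ℤ) + 1 + 1) :=
          fin2_trans _ _ _ h1 h2
        rw [ih, show (0:ℤ) + 2 * ((k + 1 : ℕ) : ℤ) = 0 + 2 * (k : ℤ) + 1 + 1 by push_cast; ring]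
        exact heq
    have hpow : ((2 : ℤ)) ^ r = 2 * 2 ^ (r - 1) := by
      rw [← pow_succ']
      congr 1
      omega
    have := even (2 ^ (r - 1))
    rw [show ((2 ^ (r - 1) : ℕ) : ℤ) = 2 ^ (r-1) by push_cast; ring] at this
    rw [← hpow] at this
    have h2 := h 0 2 (by norm_num)
    push_cast at h2
    exact h2 this
end

section
/- Let d ≥ 2, let p_i be the probability that d+i−1 i.i.d. uniform symbols from a d-letter alphabet contain every letter, and let (B_j)_{j≥1} be independent events on a probability space with P(B_j) = 0 for j ≤ d² and P(B_j) = p_i for j in the i-th interval (d+i−1)² < j ≤ (d+i)²; let T = min{j : B_j occurs}. Then the halting time distribution has an exponential tail: there exist constants C and c > 0 with P(T = j) ≤ C·e^{−c·j} for all j ≥ 1; moreover T is almost surely finite, i.e. P(B_j occurs for some j) = 1. -/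
open MeasureTheory ProbabilityTheory

/-- The full-block probability `p_i` for alphabet size `d`: the probability that
`d+i−1` i.i.d. symbols, each uniform on a `d`-letter alphabet, contain every letter;
equivalently the number of surjections from a `(d+i−1)`-set onto a `d`-set divided by
`d^(d+i−1)`. -/
noncomputable def fullBlockProb (d i : ℕ) : ℝ :=
  (Nat.card {g : Fin (d + i - 1) → Fin d // Function.Surjective g} : ℝ) /
    (d : ℝ) ^ (d + i - 1)

lemma surj_card_succ (n d : ℕ) :
    d * Nat.card {g : Fin n → Fin d // Function.Surjective g} ≤
      Nat.card {g : Fin (n+1) → Fin d // Function.Surjective g} := by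
  have hinj : Function.Injective
      (fun x : Fin d × {g : Fin n → Fin d // Function.Surjective g} =>
        (⟨Fin.snoc x.2.1 x.1, by
          intro y
          obtain ⟨z, hz⟩ := x.2.2 y
          exact ⟨Fin.castSucc z, by simp [hz]⟩⟩ :
          {g : Fin (n+1) → Fin d // Function.Surjective g})) := by
    rintro ⟨a, g, hg⟩ ⟨a', g', hg'⟩ h
    simp only [Subtype.mk.injEq] at h
    have ha : a = a' := by
      have := congrFun (congrArg Subtype.val h) (Fin.last n); simpa using this
    have hgg : g = g' := by
      funext x
      have := congrFun (congrArg Subtype.val h) (Fin.castSucc x); simpa using this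
    simp [ha, hgg]
  have := Nat.card_le_card_of_injective _ hinj
  simpa [Nat.card_prod] using this

lemma surj_card_base (d : ℕ) :
    d.factorial ≤ Nat.card {g : Fin d → Fin d // Function.Surjective g} := by
  have hinj : Function.Injective
      (fun σ : Equiv.Perm (Fin d) =>
        (⟨σ, σ.surjective⟩ : {g : Fin d → Fin d // Function.Surjective g})) := by
    intro σ τ h
    simp only [Subtype.mk.injEq] at h
    exact Equiv.coe_fn_injective h
  have := Nat.card_le_card_of_injective _ hinj
  simpa [Nat.card_eq_fintype_card, Fintype.card_perm] using this

lemma surj_card_ge (d m : ℕ) :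
    d ^ m * d.factorial ≤ Nat.card {g : Fin (d + m) → Fin d // Function.Surjective g} := by
  induction m with
  | zero => simpa using surj_card_base d
  | succ m ih =>
    have h1 := surj_card_succ (d + m) d
    calc d ^ (m+1) * d.factorial = d * (d ^ m * d.factorial) := by ring
    _ ≤ d * Nat.card {g : Fin (d + m) → Fin d // Function.Surjective g} :=
        Nat.mul_le_mul_left d ih
    _ ≤ Nat.card {g : Fin (d + m + 1) → Fin d // Function.Surjective g} := h1
    _ = Nat.card {g : Fin (d + (m + 1)) → Fin d // Function.Surjective g} := rfl

lemma surj_card_le (n d : ℕ) :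
    Nat.card {g : Fin n → Fin d // Function.Surjective g} ≤ d ^ n := by
  have := Finite.card_subtype_le (fun g : Fin n → Fin d => Function.Surjective g)
  simpa [Nat.card_eq_fintype_card] using this

lemma fullBlockProb_ge (d i : ℕ) (hd : 1 ≤ d) (hi : 1 ≤ i) :
    (d.factorial : ℝ) / (d : ℝ) ^ d ≤ fullBlockProb d i := by
  obtain ⟨m, rfl⟩ := Nat.exists_eq_add_of_le hi
  have hdm : d + (1 + m) - 1 = d + m := by omega
  have hdpos : (0:ℝ) < (d:ℝ) ^ (d + m) := by positivity
  rw [fullBlockProb, hdm]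
  rw [div_le_div_iff₀ (by positivity) hdpos]
  have hcard := surj_card_ge d m
  have hcast : ((d ^ m * d.factorial : ℕ) : ℝ) ≤
      (Nat.card {g : Fin (d + m) → Fin d // Function.Surjective g} : ℝ) :=
    Nat.cast_le.2 hcard
  push_cast at hcast
  calc (d.factorial : ℝ) * (d:ℝ) ^ (d + m) = ((d:ℝ)^m * d.factorial) * (d:ℝ)^d := by ring
  _ ≤ (Nat.card {g : Fin (d + m) → Fin d // Function.Surjective g} : ℝ) * (d:ℝ)^d := by
      apply mul_le_mul_of_nonneg_right _ (by positivity)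
      linarith [hcast]

lemma fullBlockProb_le_one (d i : ℕ) (hd : 1 ≤ d) :
    fullBlockProb d i ≤ 1 := by
  rw [fullBlockProb, div_le_one (by positivity)]
  have := surj_card_le (d + i - 1) d
  calc (Nat.card {g : Fin (d + i - 1) → Fin d // Function.Surjective g} : ℝ)
      ≤ ((d ^ (d + i - 1) : ℕ) : ℝ) := Nat.cast_le.2 this
  _ = (d:ℝ) ^ (d + i - 1) := by push_cast; ring

/-- in the probabilistic model with independent halting events `(B_j)`
(`P(B_j) = 0` for `j ≤ d²` and `P(B_j) = p_i` for `j` in the `i`-th interval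
`(d+i−1)² < j ≤ (d+i)²`, with `p_i` the full-block probability), the halting time
distribution has an exponential tail: there are constants `C` and `c > 0` with
`P(T = j) ≤ C·e^{−c·j}` for all `j ≥ 1`; moreover the halting time is almost surely
finite: `P(B_j occurs for some j ≥ 1) = 1`. -/
theorem halting_exponential_tail_and_as_finite
    {Ω : Type} [MeasurableSpace Ω] (μ : Measure Ω) [IsProbabilityMeasure μ]
    (d : ℕ) (hd : 2 ≤ d)
    (B : ℕ → Set Ω) (hBmeas : ∀ j, MeasurableSet (B j))
    (hindep : iIndepSet B μ)
    (hB0 : ∀ j : ℕ, 1 ≤ j → j ≤ d ^ 2 → μ (B j) = 0)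
    (hBi : ∀ i : ℕ, 1 ≤ i → ∀ j : ℕ, (d + i - 1) ^ 2 < j → j ≤ (d + i) ^ 2 →
        μ (B j) = ENNReal.ofReal (fullBlockProb d i)) :
    (∃ C c : ℝ, 0 < c ∧ ∀ j : ℕ, 1 ≤ j →
        μ {ω | ω ∈ B j ∧ ∀ k : ℕ, 1 ≤ k → k < j → ω ∉ B k}
          ≤ ENNReal.ofReal (C * Real.exp (-(c * (j : ℝ))))) ∧
    μ (⋃ j : ℕ, ⋃ _ : 1 ≤ j, B j) = 1 := by
  have hd1 : 1 ≤ d := by omega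
  have hfact_lt : d.factorial < d ^ d := by
    obtain ⟨k, rfl⟩ : ∃ k, d = k + 2 := ⟨d - 2, by omega⟩
    calc (k+2).factorial = (k+2) * (k+1).factorial := rfl
    _ ≤ (k+2) * (k+1)^(k+1) := Nat.mul_le_mul_left _ (Nat.factorial_le_pow _)
    _ < (k+2) * (k+2)^(k+1) := by
        have h := Nat.pow_lt_pow_left (show k+1 < k+2 by omega) (n := k+1) (by omega)
        exact Nat.mul_lt_mul_of_le_of_lt (le_refl _) h (by omega)
    _ = (k+2)^(k+2) := by ring
  set p : ℝ := (d.factorial : ℝ) / (d : ℝ) ^ d with hp_def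
  have hdR : (0:ℝ) < d := by exact_mod_cast (show 0 < d by omega)
  have hp_pos : 0 < p := div_pos (by exact_mod_cast d.factorial_pos) (by positivity)
  have hp_lt1 : p < 1 := by
    rw [hp_def, div_lt_one (by positivity)]
    calc (d.factorial:ℝ) < ((d^d : ℕ):ℝ) := by exact_mod_cast hfact_lt
    _ = (d:ℝ)^d := by push_cast; ring
  have hq' : (0:ℝ) < 1 - p := by linarith
  have hq : (0:ℝ) ≤ 1 - p := hq'.le
  have hq1 : 1 - p < 1 := by linarith
  -- complement bound
  have hcompl : ∀ k : ℕ, d^2 < k → μ ((B k)ᶜ) ≤ ENNReal.ofReal (1 - p) := by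
    intro k hk
    have hk1 : 1 ≤ k := by
      have : 0 < d^2 := by positivity
      omega
    set m := Nat.sqrt (k-1) with hm_def
    have hm1 : m^2 ≤ k - 1 := Nat.sqrt_le' (k-1)
    have hm2 : k - 1 < (m+1)^2 := Nat.lt_succ_sqrt' (k-1)
    have hmd : d ≤ m := by
      rw [hm_def, Nat.le_sqrt']
      omega
    set i := m - d + 1 with hi_def
    have hi1 : 1 ≤ i := by omega
    have hdi : d + i - 1 = m := by omega
    have hμBk : μ (B k) = ENNReal.ofReal (fullBlockProb d i) := by
      apply hBi i hi1 k
      · rw [hdi]; omega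
      · have : d + i = m + 1 := by omega
        rw [this]; omega
    rw [prob_compl_eq_one_sub (hBmeas k), hμBk]
    have h1 : ENNReal.ofReal p ≤ ENNReal.ofReal (fullBlockProb d i) :=
      ENNReal.ofReal_le_ofReal (fullBlockProb_ge d i hd1 hi1)
    calc (1:ENNReal) - ENNReal.ofReal (fullBlockProb d i)
        ≤ 1 - ENNReal.ofReal p := tsub_le_tsub_left h1 1
    _ = ENNReal.ofReal (1 - p) := by
        rw [ENNReal.ofReal_sub _ hp_pos.le, ENNReal.ofReal_one]
  -- product over Ioc
  have hIoc : ∀ N : ℕ, μ (⋂ k ∈ Finset.Ioc (d^2) N, (B k)ᶜ) ≤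
      ENNReal.ofReal ((1-p) ^ (N - d^2)) := by
    intro N
    have hprod : μ (⋂ k ∈ Finset.Ioc (d^2) N, (B k)ᶜ) =
        ∏ k ∈ Finset.Ioc (d^2) N, μ ((B k)ᶜ) :=
      ((iIndepSet_iff_iIndep B μ).1 hindep).meas_biInter
        (fun k _ => (MeasurableSpace.measurableSet_generateFrom (Set.mem_singleton _)).compl)
    rw [hprod]
    calc ∏ k ∈ Finset.Ioc (d^2) N, μ ((B k)ᶜ)
        ≤ ∏ k ∈ Finset.Ioc (d^2) N, ENNReal.ofReal (1-p) :=
          Finset.prod_le_prod' (fun k hk => hcompl k (Finset.mem_Ioc.1 hk).1)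
    _ = ENNReal.ofReal (1-p) ^ (N - d^2) := by rw [Finset.prod_const, Nat.card_Ioc]
    _ = ENNReal.ofReal ((1-p)^(N - d^2)) := (ENNReal.ofReal_pow hq _).symm
  set c : ℝ := -Real.log (1 - p) with hc_def
  have hc_pos : 0 < c := by
    have := Real.log_neg hq' hq1
    linarith
  have hpow_exp : ∀ m : ℕ, (1-p)^m = Real.exp (-(c * m)) := by
    intro m
    rw [← Real.exp_log hq', ← Real.exp_nat_mul]
    congr 1
    rw [hc_def]; ring
  constructor
  · refine ⟨Real.exp (c * ((d:ℝ)^2+1)), c, hc_pos, ?_⟩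
    intro j hj
    have hsub : {ω | ω ∈ B j ∧ ∀ k, 1 ≤ k → k < j → ω ∉ B k} ⊆
        ⋂ k ∈ Finset.Ioc (d^2) (j-1), (B k)ᶜ := by
      intro ω hω
      simp only [Set.mem_iInter, Set.mem_compl_iff]
      intro k hk
      rw [Finset.mem_Ioc] at hk
      have hk1 : 1 ≤ k := le_trans (Nat.one_le_iff_ne_zero.2 (by positivity)) hk.1.le
      exact hω.2 k hk1 (lt_of_le_of_lt hk.2 (Nat.sub_lt hj one_pos))
    have hcast : (j:ℝ) - 1 - (d:ℝ)^2 ≤ (((j-1) - d^2 : ℕ) : ℝ) := by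
      rcases le_or_gt (d^2) (j-1) with h|h
      · rw [Nat.cast_sub h, Nat.cast_sub hj]
        push_cast; linarith
      · have h0 : (j-1) - d^2 = 0 := Nat.sub_eq_zero_of_le h.le
        have hjd : j ≤ d^2 := by omega
        have : (j:ℝ) ≤ ((d^2 : ℕ):ℝ) := by exact_mod_cast hjd
        rw [h0]
        push_cast at this ⊢
        linarith
    calc μ {ω | ω ∈ B j ∧ ∀ k, 1 ≤ k → k < j → ω ∉ B k}
        ≤ μ (⋂ k ∈ Finset.Ioc (d^2) (j-1), (B k)ᶜ) := measure_mono hsub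
    _ ≤ ENNReal.ofReal ((1-p)^((j-1) - d^2)) := hIoc (j-1)
    _ ≤ ENNReal.ofReal (Real.exp (c * ((d:ℝ)^2+1)) * Real.exp (-(c * j))) := by
        apply ENNReal.ofReal_le_ofReal
        rw [hpow_exp, ← Real.exp_add]
        apply Real.exp_le_exp.2
        have := mul_le_mul_of_nonneg_left hcast hc_pos.le
        nlinarith
  · have hU : MeasurableSet (⋃ j : ℕ, ⋃ _ : 1 ≤ j, B j) :=
      MeasurableSet.iUnion fun j => MeasurableSet.iUnion fun _ => hBmeas j
    rw [← prob_compl_eq_zero_iff hU]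
    have hlim : ∀ m : ℕ, μ ((⋃ j : ℕ, ⋃ _ : 1 ≤ j, B j)ᶜ) ≤ ENNReal.ofReal ((1-p)^m) := by
      intro m
      have hUc : (⋃ j : ℕ, ⋃ _ : 1 ≤ j, B j)ᶜ ⊆ ⋂ k ∈ Finset.Ioc (d^2) (d^2+m), (B k)ᶜ := by
        intro ω hω
        simp only [Set.mem_compl_iff, Set.mem_iUnion, not_exists] at hω
        simp only [Set.mem_iInter, Set.mem_compl_iff]
        intro k hk
        rw [Finset.mem_Ioc] at hk
        have hk1 : 1 ≤ k := le_trans (Nat.one_le_iff_ne_zero.2 (by positivity)) hk.1.le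
        exact hω k hk1
      calc μ ((⋃ j : ℕ, ⋃ _ : 1 ≤ j, B j)ᶜ)
          ≤ μ (⋂ k ∈ Finset.Ioc (d^2) (d^2+m), (B k)ᶜ) := measure_mono hUc
      _ ≤ ENNReal.ofReal ((1-p)^((d^2+m) - d^2)) := hIoc _
      _ = ENNReal.ofReal ((1-p)^m) := by rw [Nat.add_sub_cancel_left]
    have htend : Filter.Tendsto (fun m : ℕ => ENNReal.ofReal ((1-p)^m))
        Filter.atTop (nhds 0) := by
      rw [← ENNReal.ofReal_zero]
      exact ENNReal.tendsto_ofReal (tendsto_pow_atTop_nhds_zero_of_lt_one hq hq1)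
    exact le_antisymm (ge_of_tendsto' htend hlim) zero_le
end

section
/- Fix an alphabet size d ≥ 1 and the jump sequence f(n) = n². Let x be a sequence of symbols from a d-letter alphabet, let n ≥ 1, and suppose that at the site j = i + n² the dragnet entries reached by jumps of size at least n support the full alphabet: the set of symbols {x_{j−m²} : m ≥ n, j − m² ≥ 1} has cardinality d. Then i ≥ d² + 2(n−1)·d − 2(n−1); that is, the staircase jump at level n in the (i,n)-plot is located at i = d² + 2(n−1)·d − 2(n−1), and consecutive staircase steps differ by 2(d−1). -/
/-- STATEMENT 19: fix alphabet size `d ≥ 1` and the jump sequence `f n = n²`. Let `x`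
be a sequence of symbols from the `d`-letter alphabet, let `n ≥ 1`, and suppose that at
the site `j = i + n²` the dragnet entries reached by jumps of size at least `n` support
the full alphabet: the set of symbols `{x (j − m²) : m ≥ n, j − m² ≥ 1}` has
cardinality `d`. Then `i ≥ d² + 2(n−1)·d − 2(n−1)`; i.e. the staircase jump at level
`n` in the `(i,n)`-plot is at `i = d² + 2(n−1)·d − 2(n−1)`, consecutive staircase
steps differing by `2(d−1)`. -/
theorem staircase_location
    (d : ℕ) (hd : 1 ≤ d) (x : ℕ → Fin d) (i n : ℕ) (hi : 1 ≤ i) (hn : 1 ≤ n)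
    (hfull : Nat.card
        ↥{s : Fin d | ∃ m : ℕ, n ≤ m ∧ m ^ 2 < i + n ^ 2 ∧ s = x (i + n ^ 2 - m ^ 2)}
      = d) :
    (d ^ 2 + 2 * (n - 1) * d - 2 * (n - 1) ≤ i) ∧
    (∀ n' : ℕ, 1 ≤ n' →
      (d ^ 2 + 2 * n' * d - 2 * n') - (d ^ 2 + 2 * (n' - 1) * d - 2 * (n' - 1))
        = 2 * (d - 1)) := by
  constructor
  · set r := Nat.sqrt (i + n ^ 2 - 1) with hr
    set S := {s : Fin d | ∃ m : ℕ, n ≤ m ∧ m ^ 2 < i + n ^ 2 ∧ s = x (i + n ^ 2 - m ^ 2)}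
      with hS
    have hsub : S ⊆ ↑((Finset.Icc n r).image fun m => x (i + n ^ 2 - m ^ 2)) := by
      rintro s ⟨m, hm1, hm2, rfl⟩
      simp only [Finset.coe_image, Set.mem_image, Finset.mem_coe, Finset.mem_Icc]
      refine ⟨m, ⟨hm1, ?_⟩, rfl⟩
      rw [hr, Nat.le_sqrt]
      have : m ^ 2 = m * m := sq m
      omega
    have hcard : d ≤ (Finset.Icc n r).card := by
      calc d = Nat.card ↥S := hfull.symm
        _ = S.ncard := Nat.card_coe_set_eq S
        _ ≤ ((((Finset.Icc n r).image fun m => x (i + n ^ 2 - m ^ 2) : Finset (Fin d))) : Set (Fin d)).ncard :=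
            Set.ncard_le_ncard hsub (Finset.finite_toSet _)
        _ = ((Finset.Icc n r).image fun m => x (i + n ^ 2 - m ^ 2)).card :=
            Set.ncard_coe_finset _
        _ ≤ (Finset.Icc n r).card := Finset.card_image_le
    rw [Nat.card_Icc] at hcard
    -- so n + d - 1 ≤ r, hence (n + d - 1)^2 ≤ i + n^2 - 1
    obtain ⟨a, rfl⟩ : ∃ a, n = a + 1 := ⟨n - 1, by omega⟩
    have hle : a + d ≤ r := by omega
    have hsq : r ^ 2 ≤ i + (a + 1) ^ 2 - 1 := Nat.sqrt_le' _
    have hkey : (a + d) ^ 2 ≤ i + (a + 1) ^ 2 - 1 :=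
      le_trans (Nat.pow_le_pow_left hle 2) hsq
    have h2 : (a + d) ^ 2 + 1 ≤ i + (a + 1) ^ 2 := by
      have : 1 ≤ (a + 1) ^ 2 := Nat.one_le_pow _ _ (by omega)
      omega
    simp only [Nat.add_sub_cancel]
    rw [tsub_le_iff_right]
    nlinarith [h2, sq_nonneg (a + 1)]
  · intro n' hn'
    obtain ⟨b, rfl⟩ : ∃ b, n' = b + 1 := ⟨n' - 1, by omega⟩
    simp only [Nat.add_sub_cancel]
    have e1 : 2 * (b + 1) * d = 2 * (b * d) + 2 * d := by ring
    have e2 : 2 * b * d = 2 * (b * d) := by ring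
    rw [e1, e2]
    have hq : b ≤ b * d := Nat.le_mul_of_pos_right _ hd
    have hp : 1 ≤ d ^ 2 := Nat.one_le_pow _ _ hd
    generalize b * d = q at hq ⊢
    generalize d ^ 2 = p at hp ⊢
    omega
end
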